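/- Let s ∈ {−1, 1}, l > 0, κ > 0, ρ₀ > 0 with 1 + s·κ·l²·ρ₀/12 > 0, and set β = √(1 + s·κ·l²·ρ₀/12) (so β > 0 and β ≠ 1). Define u(r) = 1 + s·(r²/l²)·(1 − β) and Φ(r) = −s·l² · u(r)^{−1/2} / (β·(1 − β)). Then for every r > 0 with u(r) > 0, Φ is differentiable at r with Φ′(r) = r³ / (u(r)^{3/2} · (r² + s·l²·(1 − u(r)))). -/

import Mathlib

open Real

/-- Evaluation of the integral appearing in equation (se27) for the
constant-density interior solution, where `u(r) = e^{−2g(r)}` is given by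
equation (se23): the antiderivative `Φ` of
`r³ / (u^{3/2}·(r² + s·l²·(1 − u)))`. -/
theorem stmt_6 (s l κ ρ₀ : ℝ) (hs : s = 1 ∨ s = -1) (hl : 0 < l)
    (hκ : 0 < κ) (hρ₀ : 0 < ρ₀) (hpos : 0 < 1 + s * κ * l ^ 2 * ρ₀ / 12)
    (β : ℝ) (hβ : β = Real.sqrt (1 + s * κ * l ^ 2 * ρ₀ / 12))
    (u Φ : ℝ → ℝ)
    (hu : ∀ r : ℝ, u r = 1 + s * (r ^ 2 / l ^ 2) * (1 - β))
    (hΦ : ∀ r : ℝ, Φ r = -s * l ^ 2 * (Real.sqrt (u r))⁻¹ / (β * (1 - β))) :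
    ∀ r > (0 : ℝ), 0 < u r → HasDerivAt Φ
      (r ^ 3 / (Real.sqrt (u r) ^ 3 * (r ^ 2 + s * l ^ 2 * (1 - u r)))) r := by
  intro r hr hur
  have hl0 : l ≠ 0 := ne_of_gt hl
  have hβ0 : 0 < β := hβ ▸ Real.sqrt_pos.mpr hpos
  have hβ2 : β ^ 2 = 1 + s * κ * l ^ 2 * ρ₀ / 12 := by
    rw [hβ, sq, Real.mul_self_sqrt hpos.le]
  have hβ1 : β ≠ 1 := by
    intro h
    rcases hs with h' | h' <;> rw [h, h'] at hβ2 <;> nlinarith [sq_nonneg l, mul_pos hκ hρ₀, mul_pos (mul_pos hκ (pow_pos hl 2)) hρ₀]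
  have hsq : 0 < Real.sqrt (u r) := Real.sqrt_pos.mpr hur
  have hsqu : Real.sqrt (u r) ^ 2 = u r := Real.sq_sqrt hur.le
  have hs2 : s ^ 2 = 1 := by rcases hs with h | h <;> rw [h] <;> norm_num
  -- derivative of u
  have hufun : u = fun x => 1 + s * (x ^ 2 / l ^ 2) * (1 - β) := funext hu
  have hdu : HasDerivAt u (2 * s * (1 - β) * r / l ^ 2) r := by
    rw [hufun]
    have h1 : HasDerivAt (fun x : ℝ => x ^ 2) (2 * r) r := by
      simpa using hasDerivAt_pow 2 r
    have h2 := ((h1.div_const (l ^ 2)).const_mul s).mul_const (1 - β)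
    have h3 := h2.const_add 1
    convert h3 using 1
    · rfl
    · rfl
    ring
  have hdsqrt : HasDerivAt (fun x => Real.sqrt (u x))
      (2 * s * (1 - β) * r / l ^ 2 / (2 * Real.sqrt (u r))) r :=
    (Real.hasDerivAt_sqrt (ne_of_gt hur)).comp r hdu |>.congr_deriv (by ring)
  have hdinv : HasDerivAt (fun x => (Real.sqrt (u x))⁻¹)
      (-(2 * s * (1 - β) * r / l ^ 2 / (2 * Real.sqrt (u r))) / (Real.sqrt (u r)) ^ 2) r :=
    hdsqrt.inv (ne_of_gt hsq)
  have hΦfun : Φ = fun x => -s * l ^ 2 * (Real.sqrt (u x))⁻¹ / (β * (1 - β)) := funext hΦ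
  have hd : HasDerivAt Φ
      (-s * l ^ 2 * (-(2 * s * (1 - β) * r / l ^ 2 / (2 * Real.sqrt (u r))) / (Real.sqrt (u r)) ^ 2) / (β * (1 - β))) r := by
    rw [hΦfun]
    exact (hdinv.const_mul (-s * l ^ 2)).div_const (β * (1 - β))
  convert hd using 1
  have hkey : r ^ 2 + s * l ^ 2 * (1 - u r) = β * r ^ 2 := by
    rw [hu]
    field_simp
    linear_combination (-(r ^ 2 * (1 - β))) * hs2
  rw [hkey]
  have h1β : (1 : ℝ) - β ≠ 0 := sub_ne_zero.mpr (Ne.symm hβ1)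
  field_simp
  linear_combination (-1 : ℝ) * hs2
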